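/- Let 𝓕 be a finite system of nonempty subsets of [n] and G = KG(𝓕) its Kneser graph, assumed to have no isolated vertices. (a) The map sending each vertex B′ ⊎ B″ of B₁'(𝓕) to {F ∈ 𝓕 : F ⊆ B′} ⊎ {F ∈ 𝓕 : F ⊆ B″} is a simplicial ℤ₂-map B₁'(𝓕) → B₁(G). (b) The map sending each vertex A′ ⊎ A″ of B₁(G) to (⋃A′) ⊎ (⋃A″) is a simplicial ℤ₂-map B₁(G) → B₁'(𝓕). -/

import Mathlib

open Finset

attribute [local instance] Classical.propDecidable

noncomputable section

variable {V : Type*}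

/-- The set `CN(A)` of common neighbors of `A` in `G` (so `CN(∅) = V`). -/
def CN [Fintype V] (G : SimpleGraph V) (A : Finset V) : Finset V :=
  Finset.univ.filter fun v => ∀ a ∈ A, G.Adj a v

/-- The shore of `S ⊆ V × {1,2}` lying over `b` (with `false` for the first copy of `V`
and `true` for the second). -/
def shore (S : Finset (V × Bool)) (b : Bool) : Finset V :=
  (S.filter fun p => p.2 = b).image Prod.fst

/-- `A' ⊎ A'' := (A' × {1}) ∪ (A'' × {2})`, with `false` for `1` and `true` for `2`. -/
def joinPair (A' A'' : Finset V) : Finset (V × Bool) :=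
  A'.image (fun v => (v, false)) ∪ A''.image (fun v => (v, true))

/-- The ℤ₂-action on subsets of `V × {1,2}`: interchange the two copies of `V`,
i.e. `A' ⊎ A'' ↦ A'' ⊎ A'`. -/
def swapFinset (S : Finset (V × Bool)) : Finset (V × Bool) :=
  S.image fun p => (p.1, !p.2)

/-- `G[A', A'']` is complete: every vertex of `A'` is adjacent to every vertex of `A''`. -/
def IsCompleteBip (G : SimpleGraph V) (A' A'' : Finset V) : Prop :=
  ∀ a ∈ A', ∀ b ∈ A'', G.Adj a b

/-- Simplices of the box complex `B(G)`: sets `A' ⊎ A''` with `A'`, `A''` disjoint,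
`G[A', A'']` complete and `CN(A') ≠ ∅ ≠ CN(A'')`. -/
def BoxSimplex [Fintype V] (G : SimpleGraph V) (S : Finset (V × Bool)) : Prop :=
  Disjoint (shore S false) (shore S true) ∧
  IsCompleteBip G (shore S false) (shore S true) ∧
  (CN G (shore S false)).Nonempty ∧ (CN G (shore S true)).Nonempty

/-- Simplices of the box complex `B₀(G)`: sets `A' ⊎ A''` with `A'`, `A''` disjoint and
`G[A', A'']` complete. -/
def Box0Simplex (G : SimpleGraph V) (S : Finset (V × Bool)) : Prop :=
  Disjoint (shore S false) (shore S true) ∧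
  IsCompleteBip G (shore S false) (shore S true)

/-- Vertices of `B₁(G)`: sets `A' ⊎ A''` with `A'`, `A''` nonempty, disjoint and
`G[A', A'']` complete. -/
def B1Vertex (G : SimpleGraph V) (S : Finset (V × Bool)) : Prop :=
  (shore S false).Nonempty ∧ (shore S true).Nonempty ∧
  Disjoint (shore S false) (shore S true) ∧
  IsCompleteBip G (shore S false) (shore S true)

/-- Simplices of the order complex `B₁(G)`: chains of vertices of `B₁(G)` under inclusion. -/
def B1Simplex (G : SimpleGraph V) (C : Finset (Finset (V × Bool))) : Prop :=
  (∀ T ∈ C, B1Vertex G T) ∧ IsChain (· ⊆ ·) (C : Set (Finset (V × Bool)))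

/-- Simplices of the barycentric subdivision `sd K` of the complex `K` whose simplices are
given by the predicate `P`: chains of nonempty simplices of `K` under inclusion. -/
def sdSimplex {γ : Type*} (P : Finset γ → Prop) (C : Finset (Finset γ)) : Prop :=
  (∀ S ∈ C, P S ∧ S.Nonempty) ∧ IsChain (· ⊆ ·) (C : Set (Finset γ))

/-- The Kneser graph of a set system `𝓕`: the vertices are the members of `𝓕`,
and two (distinct) members are adjacent if and only if they are disjoint. -/
def KG {α : Type*} (𝓕 : Finset (Finset α)) : SimpleGraph {F // F ∈ 𝓕} where
  Adj A B := A ≠ B ∧ Disjoint A.1 B.1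
  symm := ⟨fun A B h => ⟨h.1.symm, h.2.symm⟩⟩
  loopless := ⟨fun A h => h.1 rfl⟩

/-- Vertices of `B₁'(𝓕)`: sets `B' ⊎ B''` with `B', B'' ⊆ [n]` disjoint such that
both `B'` and `B''` contain a member of `𝓕`. -/
def B1'Vertex (n : ℕ) (𝓕 : Finset (Finset ℕ)) (T : Finset (ℕ × Bool)) : Prop :=
  shore T false ⊆ Finset.Icc 1 n ∧ shore T true ⊆ Finset.Icc 1 n ∧
  Disjoint (shore T false) (shore T true) ∧
  (∃ F ∈ 𝓕, F ⊆ shore T false) ∧ (∃ F ∈ 𝓕, F ⊆ shore T true)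

/-- Simplices of the order complex `B₁'(𝓕)`: chains of its vertices under inclusion. -/
def B1'Simplex (n : ℕ) (𝓕 : Finset (Finset ℕ)) (C : Finset (Finset (ℕ × Bool))) : Prop :=
  (∀ T ∈ C, B1'Vertex n 𝓕 T) ∧ IsChain (· ⊆ ·) (C : Set (Finset (ℕ × Bool)))

/-- The map `B' ⊎ B'' ↦ {F ∈ 𝓕 : F ⊆ B'} ⊎ {F ∈ 𝓕 : F ⊆ B''}`. -/
def toKneserSide (𝓕 : Finset (Finset ℕ)) (T : Finset (ℕ × Bool)) :
    Finset ({F // F ∈ 𝓕} × Bool) :=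
  joinPair (Finset.univ.filter fun F : {F // F ∈ 𝓕} => F.1 ⊆ shore T false)
           (Finset.univ.filter fun F : {F // F ∈ 𝓕} => F.1 ⊆ shore T true)

/-- The map `A' ⊎ A'' ↦ (⋃ A') ⊎ (⋃ A'')`. -/
def toGroundSide (𝓕 : Finset (Finset ℕ)) (T : Finset ({F // F ∈ 𝓕} × Bool)) :
    Finset (ℕ × Bool) :=
  joinPair ((shore T false).sup fun F => F.1) ((shore T true).sup fun F => F.1)

lemma mem_shore {S : Finset (V × Bool)} {b : Bool} {v : V} :
    v ∈ shore S b ↔ (v, b) ∈ S := by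
  simp only [shore, mem_image, mem_filter]
  constructor
  · rintro ⟨⟨x, y⟩, ⟨hx, rfl⟩, rfl⟩; exact hx
  · exact fun h => ⟨(v, b), ⟨h, rfl⟩, rfl⟩

lemma mem_swapFinset {S : Finset (V × Bool)} {v : V} {b : Bool} :
    (v, b) ∈ swapFinset S ↔ (v, !b) ∈ S := by
  simp only [swapFinset, mem_image]
  constructor
  · rintro ⟨⟨x, y⟩, h, heq⟩
    obtain ⟨rfl, rfl⟩ := Prod.mk.injEq .. ▸ heq
    simpa using h
  · exact fun h => ⟨(v, !b), h, by simp⟩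

lemma shore_swapFinset {S : Finset (V × Bool)} {b : Bool} :
    shore (swapFinset S) b = shore S (!b) := by
  ext v; rw [mem_shore, mem_shore, mem_swapFinset]

lemma shore_joinPair {A B : Finset V} {b : Bool} :
    shore (joinPair A B) b = if b then B else A := by
  ext v; rw [mem_shore]; cases b <;> simp [joinPair]

lemma shore_mono {S T : Finset (V × Bool)} (h : S ⊆ T) (b : Bool) :
    shore S b ⊆ shore T b := fun v hv => mem_shore.2 (h (mem_shore.1 hv))

lemma swapFinset_joinPair {A B : Finset V} :
    swapFinset (joinPair A B) = joinPair B A := by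
  ext ⟨v, b⟩
  rw [mem_swapFinset]
  cases b <;> simp [joinPair]

lemma joinPair_mono {A A' B B' : Finset V} (hA : A ⊆ A') (hB : B ⊆ B') :
    joinPair A B ⊆ joinPair A' B' :=
  Finset.union_subset_union (Finset.image_subset_image hA) (Finset.image_subset_image hB)

lemma toKneserSide_mono {𝓕 : Finset (Finset ℕ)} {S T : Finset (ℕ × Bool)} (h : S ⊆ T) :
    toKneserSide 𝓕 S ⊆ toKneserSide 𝓕 T := by
  apply joinPair_mono <;>
  · intro F hF
    simp only [mem_filter] at hF ⊢
    exact ⟨hF.1, hF.2.trans (shore_mono h _)⟩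

lemma toGroundSide_mono {𝓕 : Finset (Finset ℕ)} {S T : Finset ({F // F ∈ 𝓕} × Bool)}
    (h : S ⊆ T) : toGroundSide 𝓕 S ⊆ toGroundSide 𝓕 T := by
  exact joinPair_mono (Finset.sup_mono (shore_mono h _)) (Finset.sup_mono (shore_mono h _))

/-- For `G = KG(𝓕)`: (a) `B' ⊎ B'' ↦ {F ∈ 𝓕 : F ⊆ B'} ⊎ {F ∈ 𝓕 : F ⊆ B''}` is a
simplicial ℤ₂-map `B₁'(𝓕) → B₁(G)`; (b) `A' ⊎ A'' ↦ (⋃A') ⊎ (⋃A'')` is a simplicial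
ℤ₂-map `B₁(G) → B₁'(𝓕)`. -/
theorem B1'_iso_B1_kneser (n : ℕ) (𝓕 : Finset (Finset ℕ))
    (h𝓕 : ∀ F ∈ 𝓕, F ⊆ Finset.Icc 1 n ∧ F.Nonempty)
    (hiso : ∀ v : {F // F ∈ 𝓕}, ∃ u, (KG 𝓕).Adj v u) :
    -- (a)
    ((∀ C : Finset (Finset (ℕ × Bool)), B1'Simplex n 𝓕 C →
        B1Simplex (KG 𝓕) (C.image (toKneserSide 𝓕))) ∧
      (∀ T : Finset (ℕ × Bool), B1'Vertex n 𝓕 T →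
        toKneserSide 𝓕 (swapFinset T) = swapFinset (toKneserSide 𝓕 T))) ∧
    -- (b)
    ((∀ C : Finset (Finset ({F // F ∈ 𝓕} × Bool)), B1Simplex (KG 𝓕) C →
        B1'Simplex n 𝓕 (C.image (toGroundSide 𝓕))) ∧
      (∀ T : Finset ({F // F ∈ 𝓕} × Bool), B1Vertex (KG 𝓕) T →
        toGroundSide 𝓕 (swapFinset T) = swapFinset (toGroundSide 𝓕 T))) := by
  constructor
  · constructor
    · rintro C ⟨hv, hc⟩
      constructor
      · intro T hT
        obtain ⟨S, hS, rfl⟩ := Finset.mem_image.1 hT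
        obtain ⟨-, -, hdisj, ⟨F1, hF1, hF1s⟩, ⟨F2, hF2, hF2s⟩⟩ := hv S hS
        have hsf : shore (toKneserSide 𝓕 S) false =
            Finset.univ.filter fun F : {F // F ∈ 𝓕} => F.1 ⊆ shore S false := by
          simp [toKneserSide, shore_joinPair]
        have hst : shore (toKneserSide 𝓕 S) true =
            Finset.univ.filter fun F : {F // F ∈ 𝓕} => F.1 ⊆ shore S true := by
          simp [toKneserSide, shore_joinPair]
        have key : ∀ F : {F // F ∈ 𝓕}, F.1 ⊆ shore S false → F.1 ⊆ shore S true → False := by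
          intro F h1 h2
          have : F.1 = ∅ := by simpa using disjoint_self.1 (hdisj.mono h1 h2)
          exact ((h𝓕 F.1 F.2).2.ne_empty) this
        refine ⟨?_, ?_, ?_, ?_⟩
        · exact ⟨⟨F1, hF1⟩, by rw [hsf]; simp [hF1s]⟩
        · exact ⟨⟨F2, hF2⟩, by rw [hst]; simp [hF2s]⟩
        · rw [hsf, hst, Finset.disjoint_left]
          intro F h1 h2
          simp only [mem_filter] at h1 h2
          exact key F h1.2 h2.2
        · intro F hF F' hF'
          rw [hsf] at hF; rw [hst] at hF'
          simp only [mem_filter] at hF hF'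
          refine ⟨fun heq => key F hF.2 (heq ▸ hF'.2), hdisj.mono hF.2 hF'.2⟩
      · rw [Finset.coe_image]
        exact hc.image_of_map_rel _ _ _ fun _ _ h => toKneserSide_mono h
    · intro T _
      unfold toKneserSide
      rw [shore_swapFinset, shore_swapFinset, swapFinset_joinPair]
      simp
  · constructor
    · rintro C ⟨hv, hc⟩
      constructor
      · intro T hT
        obtain ⟨S, hS, rfl⟩ := Finset.mem_image.1 hT
        obtain ⟨hne1, hne2, hdisj, hcomp⟩ := hv S hS
        have hsf : shore (toGroundSide 𝓕 S) false = (shore S false).sup fun F : {F // F ∈ 𝓕} => F.1 := by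
          simp [toGroundSide, shore_joinPair]
        have hst : shore (toGroundSide 𝓕 S) true = (shore S true).sup fun F : {F // F ∈ 𝓕} => F.1 := by
          simp [toGroundSide, shore_joinPair]
        refine ⟨?_, ?_, ?_, ?_, ?_⟩
        · rw [hsf]; exact Finset.sup_le fun (F : {F // F ∈ 𝓕}) _ => (h𝓕 F.1 F.2).1
        · rw [hst]; exact Finset.sup_le fun (F : {F // F ∈ 𝓕}) _ => (h𝓕 F.1 F.2).1
        · rw [hsf, hst, Finset.disjoint_sup_left]
          intro F hF
          rw [Finset.disjoint_sup_right]
          intro F' hF'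
          exact (hcomp F hF F' hF').2
        · obtain ⟨F, hF⟩ := hne1
          exact ⟨F.1, F.2, by rw [hsf]; exact Finset.le_sup (f := fun F : {F // F ∈ 𝓕} => F.1) hF⟩
        · obtain ⟨F, hF⟩ := hne2
          exact ⟨F.1, F.2, by rw [hst]; exact Finset.le_sup (f := fun F : {F // F ∈ 𝓕} => F.1) hF⟩
      · rw [Finset.coe_image]
        exact hc.image_of_map_rel _ _ _ fun _ _ h => toGroundSide_mono h
    · intro T _
      unfold toGroundSide
      rw [shore_swapFinset, shore_swapFinset, swapFinset_joinPair]
      simp
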